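/- Let X be a compact metrizable countable space, f : X → X continuous, and suppose every accumulation point of X is a periodic point of f. If x ∈ X is a fixed point of f and (x_n) is a sequence of periodic points converging to x, then the orbits O_f(x_n) converge to x: for every open V ∋ x there is m such that O_f(x_n) ⊆ V for all n ≥ m. -/

import Mathlib

open Filter Topology Set Function

namespace Stmt9Aux

lemma iterate_per {X : Type*} (f : X → X) {a : ℕ} {w : X} (h : f^[a] w = w) (b : ℕ) :
    f^[a * b] w = w := by
  rw [Function.iterate_mul]
  exact Function.iterate_fixed h b

lemma fixed_of_mem_orbit {X : Type*} {g : X → X} {y ζ : X} {P j : ℕ}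
    (hy : g y = y) (hP : 1 ≤ P) (hζ : g^[P] ζ = ζ) (hj : y = g^[j] ζ) : ζ = y := by
  have h1 : g^[P * j] ζ = ζ := iterate_per g hζ j
  have hle : j ≤ P * j := Nat.le_mul_of_pos_left j hP
  calc ζ = g^[P * j] ζ := h1.symm
    _ = g^[(P * j - j) + j] ζ := by rw [Nat.sub_add_cancel hle]
    _ = g^[P * j - j] (g^[j] ζ) := Function.iterate_add_apply g _ _ _
    _ = g^[P * j - j] y := by rw [← hj]
    _ = y := Function.iterate_fixed hy _

variable {X : Type*} [MetricSpace X] [Countable X]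

lemma exists_clopen_subset {U : Set X} {x : X} (hU : IsOpen U) (hx : x ∈ U) :
    ∃ V : Set X, IsClopen V ∧ x ∈ V ∧ V ⊆ U := by
  obtain ⟨ε, hε, hball⟩ := Metric.isOpen_iff.1 hU x hx
  have hD : (Set.range fun y : X => dist x y).Countable := Set.countable_range _
  have hIoo : ¬ (Set.Ioo (ε/2) ε).Countable := by
    intro h
    have h1 : (Cardinal.mk (Set.Ioo (ε/2) ε)) = Cardinal.continuum :=
      Cardinal.mk_Ioo_real (by linarith)
    have h2 := h.le_aleph0
    rw [h1] at h2
    exact absurd h2 Cardinal.aleph0_lt_continuum.not_ge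
  obtain ⟨r, hrIoo, hrD⟩ : ∃ r ∈ Set.Ioo (ε/2) ε, r ∉ Set.range fun y : X => dist x y := by
    by_contra hcon
    push_neg at hcon
    exact hIoo (hD.mono hcon)
  have hr0 : 0 < r := by have := hrIoo.1; linarith
  have hclosed : Metric.ball x r = Metric.closedBall x r := by
    ext y
    simp only [Metric.mem_ball, Metric.mem_closedBall]
    constructor
    · exact le_of_lt
    · intro h
      rcases lt_or_eq_of_le h with h' | h'
      · exact h'
      · exact absurd ⟨y, by simp only []; rw [dist_comm]; exact h'⟩ hrD
  refine ⟨Metric.ball x r, ⟨hclosed ▸ Metric.isClosed_closedBall, Metric.isOpen_ball⟩,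
    Metric.mem_ball_self hr0, fun y hy => hball ?_⟩
  exact Metric.ball_subset_ball hrIoo.2.le hy

/-- The "good" property: orbits of periodic points converging to `y` eventually stay in
any clopen neighborhood of `y` (for the map `f^[q]`). -/
def Good (f : X → X) (q : ℕ) (y : X) : Prop :=
  ∀ v : ℕ → X, (∀ n, ∃ m, 1 ≤ m ∧ (f^[q])^[m] (v n) = v n) →
    Tendsto v atTop (𝓝 y) →
    ∀ V : Set X, IsClopen V → y ∈ V →
      ∀ᶠ n in atTop, (Set.range fun k => (f^[q])^[k] (v n)) ⊆ V

/-- The set of "bad" periodic points. -/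
def A (f : X → X) : Set X := {w | ∃ q, 1 ≤ q ∧ f^[q] w = w ∧ ¬ Good f q w}

variable [CompactSpace X]

lemma preperfectA (f : X → X) (hf : Continuous f)
    (hacc : ∀ z : X, (𝓝[≠] z).NeBot → ∃ n : ℕ, 1 ≤ n ∧ f^[n] z = z) :
    Preperfect (A f) := by
  classical
  intro y hy
  obtain ⟨q, hq1, hgy, hbad⟩ := hy
  rw [accPt_iff_nhds]
  intro N hN
  set g := f^[q] with hgdef
  have hgc : Continuous g := hf.iterate q
  rw [Good] at hbad
  push_neg at hbad
  obtain ⟨v, hvper, hvlim, V, hVc, hyV, hbad⟩ := hbad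
  obtain ⟨O, hON, hOopen, hyO⟩ := mem_nhds_iff.1 hN
  obtain ⟨V', hV'c, hyV', hV'sub⟩ := exists_clopen_subset (hVc.2.inter hOopen) ⟨hyV, hyO⟩
  have hV'V : V' ⊆ V := fun z hz => (hV'sub hz).1
  have hV'N : V' ⊆ N := fun z hz => hON (hV'sub hz).2
  obtain ⟨U, hUc, hyU, hUsub⟩ := exists_clopen_subset (hV'c.2.inter (hV'c.2.preimage hgc))
    ⟨hyV', Set.mem_preimage.2 (by rw [hgy]; exact hyV')⟩
  have hUV' : U ⊆ V' := fun z hz => (hUsub hz).1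
  have hUg : ∀ z ∈ U, g z ∈ V' := fun z hz => (hUsub hz).2
  have hfreq : ∃ᶠ n in atTop, v n ∈ U ∧ ∃ j, g^[j] (v n) ∉ V' := by
    apply (hbad.and_eventually (hvlim.eventually (hUc.2.mem_nhds hyU))).mono
    rintro n ⟨hn1, hn2⟩
    refine ⟨hn2, ?_⟩
    rw [Set.not_subset] at hn1
    obtain ⟨a, ⟨j, rfl⟩, haV⟩ := hn1
    exact ⟨j, fun h => haV (hV'V h)⟩
  obtain ⟨φ, hφmono, hφ⟩ := Filter.extraction_of_frequently_atTop hfreq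
  have hexists : ∀ k, ∃ j, g^[j] (v (φ k)) ∉ V' := fun k => (hφ k).2
  set κ : ℕ → ℕ := fun k => Nat.find (hexists k) with hκdef
  have hκpos : ∀ k, 1 ≤ κ k := by
    intro k
    by_contra h
    have h0 : κ k = 0 := by omega
    have := Nat.find_spec (hexists k)
    rw [show Nat.find (hexists k) = κ k from rfl, h0] at this
    exact this (hUV' (hφ k).1)
  set z : ℕ → X := fun k => g^[κ k - 1] (v (φ k)) with hzdef
  have hzV' : ∀ k, z k ∈ V' := by
    intro k
    by_contra h
    exact Nat.find_min (hexists k) (show κ k - 1 < κ k by have := hκpos k; omega) h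
  have hgz : ∀ k, g (z k) ∉ V' := by
    intro k
    have hspec := Nat.find_spec (hexists k)
    have heq : g (z k) = g^[κ k] (v (φ k)) := by
      show g (g^[κ k - 1] (v (φ k))) = g^[κ k] (v (φ k))
      rw [← Function.iterate_succ_apply' g]
      congr 1
      have := hκpos k; omega
    rw [heq]
    exact hspec
  have hzU : ∀ k, z k ∉ U := fun k hk => hgz k (hUg _ hk)
  have hzper : ∀ k, ∃ m, 1 ≤ m ∧ g^[m] (z k) = z k := by
    intro k
    obtain ⟨m, hm1, hm2⟩ := hvper (φ k)
    refine ⟨m, hm1, ?_⟩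
    show g^[m] (g^[κ k - 1] (v (φ k))) = g^[κ k - 1] (v (φ k))
    rw [← Function.iterate_add_apply, add_comm, Function.iterate_add_apply, hm2]
  obtain ⟨ζ, -, ψ, hψmono, hζlim⟩ :=
    IsCompact.tendsto_subseq isCompact_univ (fun k => Set.mem_univ (z k))
  have hζV' : ζ ∈ V' := hV'c.1.mem_of_tendsto hζlim
    (Filter.Eventually.of_forall fun k => hzV' (ψ k))
  have hζU : ζ ∉ U := by
    have : ζ ∈ Uᶜ := (hUc.2.isClosed_compl).mem_of_tendsto hζlim
      (Filter.Eventually.of_forall fun k => hzU (ψ k))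
    exact this
  have hζne : ζ ≠ y := fun h => hζU (h ▸ hyU)
  by_cases hcA : ∃ᶠ k in atTop, z (ψ k) = ζ
  · exfalso
    obtain ⟨θ, hθmono, hθ⟩ := Filter.extraction_of_frequently_atTop hcA
    obtain ⟨P, hP1, hPζ⟩ : ∃ P, 1 ≤ P ∧ g^[P] ζ = ζ := by
      obtain ⟨m, hm1, hm2⟩ := hzper (ψ (θ 0))
      exact ⟨m, hm1, by rw [← hθ 0]; exact hm2⟩
    have hvmem : ∀ k, ∃ m, v (φ (ψ (θ k))) = g^[m] ζ := by
      intro k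
      obtain ⟨m, hm1, hm2⟩ := hvper (φ (ψ (θ k)))
      set c := κ (ψ (θ k)) - 1 with hcdef
      have h1 : g^[c] (v (φ (ψ (θ k)))) = ζ := hθ k
      have hle : c ≤ m * c := Nat.le_mul_of_pos_left c hm1
      refine ⟨m * c - c, ?_⟩
      calc v (φ (ψ (θ k))) = g^[m * c] (v (φ (ψ (θ k)))) := (iterate_per g hm2 c).symm
        _ = g^[(m * c - c) + c] (v (φ (ψ (θ k)))) := by rw [Nat.sub_add_cancel hle]
        _ = g^[m * c - c] (g^[c] (v (φ (ψ (θ k))))) := Function.iterate_add_apply g _ _ _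
        _ = g^[m * c - c] ζ := by rw [h1]
    have hSfin : (Set.range fun j => g^[j] ζ).Finite := by
      apply Set.Finite.subset ((Set.finite_Iio P).image fun j => g^[j] ζ)
      rintro _ ⟨j, rfl⟩
      refine ⟨j % P, Nat.mod_lt _ (by omega), ?_⟩
      show g^[j % P] ζ = g^[j] ζ
      calc g^[j % P] ζ = g^[j % P] (g^[P * (j / P)] ζ) := by rw [iterate_per g hPζ (j / P)]
        _ = g^[j % P + P * (j / P)] ζ := (Function.iterate_add_apply g _ _ _).symm
        _ = g^[j] ζ := by rw [Nat.mod_add_div j P]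
    have hyS : y ∈ Set.range fun j => g^[j] ζ := by
      apply hSfin.isClosed.mem_of_tendsto
        (hvlim.comp ((hφmono.comp (hψmono.comp hθmono)).tendsto_atTop))
      exact Filter.Eventually.of_forall fun k => by
        obtain ⟨m, hm⟩ := hvmem k
        exact ⟨m, hm.symm⟩
    obtain ⟨j, hj⟩ := hyS
    exact hζne (fixed_of_mem_orbit hgy hP1 hPζ hj.symm)
  · rw [Filter.not_frequently] at hcA
    obtain ⟨K, hK⟩ := Filter.eventually_atTop.1 hcA
    set θ : ℕ → ℕ := fun k => k + K with hθdef
    have hθmono : StrictMono θ := fun a b h => by simp only [hθdef]; omega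
    set Z : ℕ → X := fun k => z (ψ (θ k)) with hZdef
    have hZne : ∀ k, Z k ≠ ζ := fun k => hK (θ k) (Nat.le_add_left K k)
    have hZlim : Tendsto Z atTop (𝓝 ζ) := hζlim.comp hθmono.tendsto_atTop
    have hNB : (𝓝[≠] ζ).NeBot := by
      have h1 : Tendsto Z atTop (𝓝[≠] ζ) :=
        tendsto_nhdsWithin_of_tendsto_nhds_of_eventually_within _ hZlim
          (Filter.Eventually.of_forall fun k => by simpa using hZne k)
      exact h1.neBot
    obtain ⟨p, hp1, hpζf⟩ := hacc ζ hNB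
    have hpζ : g^[p] ζ = ζ := by
      show (f^[q])^[p] ζ = ζ
      rw [← Function.iterate_mul, mul_comm, Function.iterate_mul]
      exact Function.iterate_fixed hpζf q
    refine ⟨ζ, ⟨hV'N hζV', q * p, Nat.mul_pos hq1 hp1, ?_, ?_⟩, hζne⟩
    · rw [Function.iterate_mul]; exact hpζ
    · intro hgood
      have hZper : ∀ k, ∃ M, 1 ≤ M ∧ (f^[q*p])^[M] (Z k) = Z k := by
        intro k
        obtain ⟨m, hm1, hm2⟩ := hzper (ψ (θ k))
        refine ⟨m, hm1, ?_⟩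
        calc (f^[q*p])^[m] (Z k) = f^[(q*p)*m] (Z k) :=
              congrFun (Function.iterate_mul f (q*p) m).symm (Z k)
          _ = (f^[q*m])^[p] (Z k) := by
              rw [show (q*p)*m = (q*m)*p by ring]
              exact congrFun (Function.iterate_mul f (q*m) p) (Z k)
          _ = Z k := Function.iterate_fixed
              (by rw [Function.iterate_mul]; exact hm2) p
      set ν : ℕ → ℕ := fun k => φ (ψ (θ k)) with hνdef
      set c : ℕ → ℕ := fun k => κ (ψ (θ k)) - 1 with hcdef
      have hcz : ∀ k, g^[c k] (v (ν k)) = Z k := fun k => rfl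
      have hvν : ∀ k, ∃ m, g^[m] (Z k) = v (ν k) := by
        intro k
        obtain ⟨Q, hQ1, hQ2⟩ := hvper (ν k)
        have hle : c k ≤ c k * Q := Nat.le_mul_of_pos_right (c k) hQ1
        refine ⟨c k * Q - c k, ?_⟩
        rw [← hcz k, ← Function.iterate_add_apply, Nat.sub_add_cancel hle, mul_comm]
        exact iterate_per g hQ2 (c k)
      choose m hm using hvν
      set a : ℕ → ℕ := fun k => m k / p with hadef
      set i : ℕ → ℕ := fun k => m k % p with hidef
      have hik : ∀ k, i k < p := fun k => Nat.mod_lt _ (by omega)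
      have hw : ∀ k, v (ν k) = g^[i k] ((f^[q*p])^[a k] (Z k)) := by
        intro k
        have h1 : (f^[q*p])^[a k] (Z k) = g^[p * a k] (Z k) := by
          rw [Function.iterate_mul f q p, ← Function.iterate_mul]
        rw [h1, ← Function.iterate_add_apply,
          show i k + p * a k = m k from Nat.mod_add_div (m k) p]
        exact (hm k).symm
      have hwlim : Tendsto (fun k => (f^[q*p])^[a k] (Z k)) atTop (𝓝 ζ) := by
        rw [tendsto_nhds]
        intro s hs hζs
        obtain ⟨W, hWc, hζW, hWs⟩ := exists_clopen_subset hs hζs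
        exact (hgood Z hZper hZlim W hWc hζW).mono fun k hk => hWs (hk ⟨a k, rfl⟩)
      obtain ⟨i0, hi0⟩ : ∃ i0, ∃ᶠ k in atTop, i k = i0 := by
        obtain ⟨⟨i0, hi0lt⟩, hinf⟩ :=
          Finite.exists_infinite_fiber (fun k => (⟨i k, hik k⟩ : Fin p))
        refine ⟨i0, ?_⟩
        rw [Filter.frequently_atTop]
        intro a0
        have hSinf : {k | i k = i0}.Infinite := by
          have h1 : ((fun k => (⟨i k, hik k⟩ : Fin p)) ⁻¹' {⟨i0, hi0lt⟩}).Infinite :=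
            Set.infinite_coe_iff.1 hinf
          exact h1.mono fun k hk => by
            simpa using congrArg Fin.val (Set.mem_singleton_iff.1 hk)
        obtain ⟨b, hb1, hb2⟩ := hSinf.exists_gt a0
        exact ⟨b, hb2.le, hb1⟩
      obtain ⟨θ2, hθ2mono, hθ2⟩ := Filter.extraction_of_frequently_atTop hi0
      have h2 : Tendsto (fun k => (f^[q*p])^[a (θ2 k)] (Z (θ2 k))) atTop (𝓝 ζ) :=
        hwlim.comp hθ2mono.tendsto_atTop
      have h3 : Tendsto (fun k => v (ν (θ2 k))) atTop (𝓝 (g^[i0] ζ)) := by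
        have h4 := ((hgc.iterate i0).tendsto ζ).comp h2
        apply h4.congr
        intro k
        show g^[i0] ((f^[q*p])^[a (θ2 k)] (Z (θ2 k))) = v (ν (θ2 k))
        rw [hw (θ2 k), hθ2 k]
      have h5 : Tendsto (fun k => v (ν (θ2 k))) atTop (𝓝 y) :=
        hvlim.comp ((hφmono.comp (hψmono.comp (hθmono.comp hθ2mono)))).tendsto_atTop
      have h6 : g^[i0] ζ = y := tendsto_nhds_unique h3 h5
      exact hζne (fixed_of_mem_orbit hgy hp1 hpζ h6.symm)

lemma A_empty (f : X → X) (hf : Continuous f)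
    (hacc : ∀ z : X, (𝓝[≠] z).NeBot → ∃ n : ℕ, 1 ≤ n ∧ f^[n] z = z) :
    A f = ∅ := by
  by_contra h
  have hne : (closure (A f)).Nonempty := (Set.nonempty_iff_ne_empty.2 h).closure
  have hperf := (preperfectA f hf hacc).perfect_closure
  obtain ⟨F, hFsub, hFcont, hFinj⟩ := hperf.exists_nat_bool_injection hne
  obtain ⟨e, he⟩ := exists_injective_nat X
  classical
  have hinj : Function.Injective
      (fun s : Set ℕ => e (F (fun n => decide (n ∈ s)))) := by
    intro s t hst
    have h1 := hFinj (he hst)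
    ext n
    have h2 := congrFun h1 n
    simpa using h2
  exact Function.cantor_injective _ hinj

end Stmt9Aux

open Stmt9Aux in
theorem stmt_9 {X : Type*} [TopologicalSpace X] [CompactSpace X]
    [TopologicalSpace.MetrizableSpace X] [Countable X]
    (f : X → X) (hf : Continuous f)
    (hacc : ∀ z : X, (𝓝[≠] z).NeBot → ∃ n : ℕ, 1 ≤ n ∧ f^[n] z = z)
    (x : X) (hx : f x = x) (u : ℕ → X)
    (hper : ∀ n : ℕ, ∃ m : ℕ, 1 ≤ m ∧ f^[m] (u n) = u n)
    (hu : Filter.Tendsto u Filter.atTop (𝓝 x)) :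
    ∀ V : Set X, IsOpen V → x ∈ V →
      ∃ m : ℕ, ∀ n ≥ m, (Set.range fun k => f^[k] (u n)) ⊆ V := by
  letI : MetricSpace X := TopologicalSpace.metrizableSpaceMetric X
  intro V hV hxV
  have hA : A f = ∅ := A_empty f hf hacc
  have hgood : Good f 1 x := by
    by_contra h
    have hmem : x ∈ A f := ⟨1, le_refl 1, by simpa using hx, h⟩
    rw [hA] at hmem
    exact hmem
  obtain ⟨V', hV'c, hxV', hV'sub⟩ := exists_clopen_subset hV hxV
  have hper' : ∀ n, ∃ m, 1 ≤ m ∧ (f^[1])^[m] (u n) = u n := by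
    intro n
    obtain ⟨m, h1, h2⟩ := hper n
    exact ⟨m, h1, by simpa using h2⟩
  have hev := hgood u hper' hu V' hV'c hxV'
  rw [Filter.eventually_atTop] at hev
  obtain ⟨m, hm⟩ := hev
  refine ⟨m, fun n hn => ?_⟩
  rintro _ ⟨k, rfl⟩
  apply hV'sub
  have := hm n hn ⟨k, rfl⟩
  simpa using this
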